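/- Let ψ : ℝ → ℝ be measurable with ∫_ℝ ψ(t)² dt = 1, vanishing outside a measurable set S ⊆ ℝ of finite Lebesgue measure L > 0, and with t ↦ ψ(t)² log₂ ψ(t)² integrable. Then equality H_t(ψ) = log₂ L holds if and only if ψ(t)² = 1/L for almost every t ∈ S. -/

import Mathlib

open MeasureTheory Real

/-- Time Shannon entropy `H_t(ψ) = −∫ ψ(t)² log₂ ψ(t)² dt`
(convention `0 · log₂ 0 = 0`, which `Real.logb` obeys). -/
lemma aux_nonneg {x : ℝ} (hx : 0 ≤ x) : 0 ≤ x * Real.log x - x + 1 := by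
  rcases eq_or_lt_of_le hx with h | h
  · simp [← h]
  · have h2 := Real.log_le_sub_one_of_pos (show (0:ℝ) < x⁻¹ by positivity)
    rw [Real.log_inv] at h2
    have : x * (-Real.log x) ≤ x * (x⁻¹ - 1) := by
      exact mul_le_mul_of_nonneg_left h2 hx
    rw [mul_sub, mul_inv_cancel₀ h.ne'] at this
    nlinarith

lemma aux_eq_iff {x : ℝ} (hx : 0 ≤ x) : x * Real.log x - x + 1 = 0 ↔ x = 1 := by
  constructor
  · intro he
    rcases eq_or_lt_of_le hx with h | h
    · simp [← h] at he
    · by_contra hx1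
      have h2 := Real.log_lt_sub_one_of_pos (show (0:ℝ) < x⁻¹ by positivity)
        (by intro hc; exact hx1 (by rw [inv_eq_one] at hc; exact hc))
      rw [Real.log_inv] at h2
      have : x * (-Real.log x) < x * (x⁻¹ - 1) := by
        exact (mul_lt_mul_iff_right₀ h).mpr h2
      rw [mul_sub, mul_inv_cancel₀ h.ne'] at this
      nlinarith
  · intro he; simp [he]

noncomputable def timeEntropy (ψ : ℝ → ℝ) : ℝ :=
  -∫ t : ℝ, ψ t ^ 2 * Real.logb 2 (ψ t ^ 2)

/-- Equality in the maximal-entropy bound `H_t(ψ) ≤ log₂ L` holds iff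
`ψ² = 1/L` almost everywhere on the support set `S` (Haar-type wavelets). -/
theorem timeEntropy_eq_logb_measure_support_iff (ψ : ℝ → ℝ) (hmeas : Measurable ψ)
    (hnorm : ∫ t : ℝ, ψ t ^ 2 = 1)
    (S : Set ℝ) (hS : MeasurableSet S) (L : ℝ) (hL : 0 < L)
    (hSL : volume S = ENNReal.ofReal L)
    (hsupp : ∀ t ∉ S, ψ t = 0)
    (hent : Integrable (fun t : ℝ => ψ t ^ 2 * Real.logb 2 (ψ t ^ 2))) :
    timeEntropy ψ = Real.logb 2 L ↔ (∀ᵐ t : ℝ, t ∈ S → ψ t ^ 2 = 1 / L) := by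
  have hψ2 : Integrable (fun t : ℝ => ψ t ^ 2) := by
    by_contra hc
    rw [integral_undef hc] at hnorm
    norm_num at hnorm
  have hlog2 : (0:ℝ) < Real.log 2 := Real.log_pos one_lt_two
  have hentlog : Integrable (fun t : ℝ => ψ t ^ 2 * Real.log (ψ t ^ 2)) := by
    have h1 := hent.mul_const (Real.log 2)
    refine h1.congr (Filter.Eventually.of_forall fun t => ?_)
    simp only [Real.logb]
    field_simp
  have hpt : ∀ t, L * ψ t ^ 2 * Real.log (L * ψ t ^ 2)
      = L * Real.log L * ψ t ^ 2 + L * (ψ t ^ 2 * Real.log (ψ t ^ 2)) := by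
    intro t
    rcases eq_or_ne (ψ t) 0 with h0 | h0
    · simp [h0]
    · rw [Real.log_mul hL.ne' (by positivity)]
      ring
  set μ := volume.restrict S with hμ
  have hfin : volume S ≠ ⊤ := by rw [hSL]; exact ENNReal.ofReal_ne_top
  have hSvol : (volume S).toReal = L := by rw [hSL, ENNReal.toReal_ofReal hL.le]
  have hint1 : ∫ t, ψ t ^ 2 ∂μ = 1 := by
    rw [hμ, setIntegral_eq_integral_of_forall_compl_eq_zero
      (fun t ht => by simp [hsupp t ht]), hnorm]
  set A := ∫ t : ℝ, ψ t ^ 2 * Real.log (ψ t ^ 2) with hA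
  have hint2 : ∫ t, ψ t ^ 2 * Real.log (ψ t ^ 2) ∂μ = A := by
    rw [hμ, hA]
    exact setIntegral_eq_integral_of_forall_compl_eq_zero
      (fun t ht => by simp [hsupp t ht])
  set h : ℝ → ℝ := fun t => L * ψ t ^ 2 * Real.log (L * ψ t ^ 2) - L * ψ t ^ 2 + 1 with hh
  have e1 : Integrable
      (fun t => L * Real.log L * ψ t ^ 2 + L * (ψ t ^ 2 * Real.log (ψ t ^ 2))) μ :=
    ((hψ2.const_mul _).add (hentlog.const_mul _)).restrict
  have e1' : Integrable (fun t => L * ψ t ^ 2 * Real.log (L * ψ t ^ 2)) μ :=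
    e1.congr (Filter.Eventually.of_forall fun t => (hpt t).symm)
  have e2 : Integrable (fun t => L * ψ t ^ 2) μ := (hψ2.const_mul _).restrict
  have e3 : Integrable (fun _ : ℝ => (1:ℝ)) μ := by
    refine integrable_const_iff.mpr (Or.inr ?_)
    rw [hμ]; constructor; rw [Measure.restrict_apply_univ]
    exact hfin.lt_top
  have hint : Integrable h μ := (e1'.sub e2).add e3
  have hμuniv : ∫ _ : ℝ, (1:ℝ) ∂μ = L := by
    rw [integral_const, smul_eq_mul, mul_one, hμ, measureReal_def, Measure.restrict_apply_univ, hSvol]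
  have hintval : ∫ t, h t ∂μ = L * Real.log L + L * A := by
    have hsub : ∫ t, (L * ψ t ^ 2 * Real.log (L * ψ t ^ 2) - L * ψ t ^ 2) ∂μ
        = (∫ t, L * ψ t ^ 2 * Real.log (L * ψ t ^ 2) ∂μ) - ∫ t, L * ψ t ^ 2 ∂μ :=
      integral_sub e1' e2
    have hadd : ∫ t, ((L * ψ t ^ 2 * Real.log (L * ψ t ^ 2) - L * ψ t ^ 2) + 1) ∂μ
        = (∫ t, (L * ψ t ^ 2 * Real.log (L * ψ t ^ 2) - L * ψ t ^ 2) ∂μ)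
          + ∫ _ : ℝ, (1:ℝ) ∂μ :=
      integral_add (e1'.sub e2) e3
    have hrm : ∫ t, h t ∂μ
        = ∫ t, ((L * ψ t ^ 2 * Real.log (L * ψ t ^ 2) - L * ψ t ^ 2) + 1) ∂μ := rfl
    rw [hrm, hadd, hsub, hμuniv]
    have h1 : ∫ t, L * ψ t ^ 2 * Real.log (L * ψ t ^ 2) ∂μ
        = L * Real.log L + L * A := by
      rw [integral_congr_ae (Filter.Eventually.of_forall hpt),
        integral_add ((hψ2.const_mul _).restrict) ((hentlog.const_mul _).restrict),
        integral_const_mul, integral_const_mul, hint1, hint2]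
      ring
    have h2 : ∫ t, L * ψ t ^ 2 ∂μ = L := by
      rw [integral_const_mul, hint1, mul_one]
    rw [h1, h2]; ring
  have hEnt : timeEntropy ψ = -(A / Real.log 2) := by
    rw [timeEntropy, hA]
    congr 1
    rw [← integral_div]
    refine integral_congr_ae (Filter.Eventually.of_forall fun t => ?_)
    simp only [Real.logb]
    ring
  have step1 : timeEntropy ψ = Real.logb 2 L ↔ A = -Real.log L := by
    rw [hEnt]
    simp only [Real.logb]
    rw [← neg_div, div_eq_div_iff hlog2.ne' hlog2.ne']
    constructor
    · intro he
      have := mul_right_cancel₀ hlog2.ne' he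
      linarith
    · intro he
      rw [he]
      ring
  have step2 : A = -Real.log L ↔ ∫ t, h t ∂μ = 0 := by
    rw [hintval]
    constructor
    · intro he; rw [he]; ring
    · intro he; nlinarith
  have hnonneg : 0 ≤ᵐ[μ] h := Filter.Eventually.of_forall fun t =>
    aux_nonneg (by positivity : (0:ℝ) ≤ L * ψ t ^ 2)
  have step3 : (∫ t, h t ∂μ) = 0 ↔ h =ᵐ[μ] 0 :=
    integral_eq_zero_iff_of_nonneg_ae hnonneg hint
  have step4 : (h =ᵐ[μ] 0) ↔ ∀ᵐ t : ℝ, t ∈ S → ψ t ^ 2 = 1 / L := by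
    rw [hμ, Filter.EventuallyEq, ae_restrict_iff' hS]
    refine Filter.eventually_congr (Filter.Eventually.of_forall fun t => ?_)
    constructor
    · intro h1 ht
      have h2 := aux_eq_iff (by positivity : (0:ℝ) ≤ L * ψ t ^ 2) |>.mp (h1 ht)
      field_simp
      linarith
    · intro h1 ht
      have h2 := h1 ht
      show L * ψ t ^ 2 * Real.log (L * ψ t ^ 2) - L * ψ t ^ 2 + 1 = 0
      rw [h2]
      rw [mul_one_div, div_self hL.ne']
      simp
  rw [step1, step2, step3, step4]
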